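/- There is no constant C > 0 such that C·(∫₀^π v(x) sin(x) dx)² ≤ ∫₀^π (v'(x))² sin(x) dx holds for all v in W₀^{1,2}((0,π)). Concretely, for ε ∈ (0,π/4), the functions v_ε defined by v_ε(x) = 0 on [0,ε²] ∪ [π-ε², π], v_ε(x) = log(x/ε²) on [ε², ε], v_ε(x) = log(1/ε) on [ε, π-ε], v_ε(x) = log((π-x)/ε²) on [π-ε², π-ε] (extended symmetrically) satisfy (∫₀^π v_ε sin dx)² / ∫₀^π (v_ε')² sin dx → ∞ as ε → 0⁺. -/

import Mathlib

open MeasureTheory Real Filter intervalIntegral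

/-- The piecewise log-plateau function `v_ε` on `[0, π]`. -/
noncomputable def vfam (ε x : ℝ) : ℝ :=
  if x ≤ ε ^ 2 then 0
  else if x ≤ ε then Real.log (x / ε ^ 2)
  else if x ≤ Real.pi - ε then Real.log (1 / ε)
  else if x ≤ Real.pi - ε ^ 2 then Real.log ((Real.pi - x) / ε ^ 2)
  else 0

/-- The (a.e.) derivative of `vfam ε`. -/
noncomputable def vfam' (ε x : ℝ) : ℝ :=
  if ε ^ 2 < x ∧ x < ε then 1 / x
  else if Real.pi - ε < x ∧ x < Real.pi - ε ^ 2 then 1 / (x - Real.pi)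
  else 0

noncomputable def gfun (ε x : ℝ) : ℝ :=
  if ε ^ 2 < x ∧ x < ε then 1 / x
  else if Real.pi - ε < x ∧ x < Real.pi - ε ^ 2 then 1 / (Real.pi - x)
  else 0

lemma vfam_meas (ε : ℝ) : Measurable (vfam ε) := by
  unfold vfam
  refine Measurable.ite measurableSet_Iic (by fun_prop) ?_
  refine Measurable.ite measurableSet_Iic (Real.measurable_log.comp (by fun_prop)) ?_
  refine Measurable.ite measurableSet_Iic (by fun_prop) ?_
  exact Measurable.ite measurableSet_Iic (Real.measurable_log.comp (by fun_prop)) (by fun_prop)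

lemma vfam'_meas (ε : ℝ) : Measurable (vfam' ε) := by
  unfold vfam'
  refine Measurable.ite (measurableSet_Ioo (a := ε^2) (b := ε)) (by fun_prop) ?_
  exact Measurable.ite (measurableSet_Ioo (a := Real.pi - ε) (b := Real.pi - ε^2)) (by fun_prop) (by fun_prop)

lemma gfun_meas (ε : ℝ) : Measurable (gfun ε) := by
  unfold gfun
  refine Measurable.ite (measurableSet_Ioo (a := ε^2) (b := ε)) (by fun_prop) ?_
  exact Measurable.ite (measurableSet_Ioo (a := Real.pi - ε) (b := Real.pi - ε^2)) (by fun_prop) (by fun_prop)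

lemma ii_of_bounded {f : ℝ → ℝ} (hm : Measurable f) {C : ℝ} (a b : ℝ)
    (hb : ∀ x, |f x| ≤ C) : IntervalIntegrable f volume a b := by
  refine intervalIntegrable_iff.mpr (Measure.integrableOn_of_bounded ?_ hm.aestronglyMeasurable
    (ae_of_all _ fun x => by simpa [Real.norm_eq_abs] using hb x))
  exact (measure_Ioc_lt_top).ne

lemma vfam_abs_le {ε : ℝ} (h0 : 0 < ε) (h1 : ε < 1) (x : ℝ) :
    |vfam ε x| ≤ -Real.log ε := by
  have hL : 0 ≤ -Real.log ε := by
    have := Real.log_neg h0 h1; linarith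
  have he2 : (0:ℝ) < ε ^ 2 := by positivity
  have hlogdiv : Real.log (ε / ε ^ 2) = -Real.log ε := by
    rw [Real.log_div h0.ne' (by positivity), Real.log_pow]; push_cast; ring
  unfold vfam
  split_ifs with H1 H2 H3 H4
  · simpa using hL
  · have hx2 : ε ^ 2 < x := not_le.mp H1
    have hnn : 0 ≤ Real.log (x / ε ^ 2) :=
      Real.log_nonneg ((one_le_div he2).mpr hx2.le)
    rw [abs_of_nonneg hnn, ← hlogdiv]
    exact Real.log_le_log (div_pos (he2.trans hx2) he2) (by gcongr)
  · rw [one_div, Real.log_inv, abs_of_nonneg hL]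
  · have hx2 : Real.pi - ε < x := by
      have := not_le.mp H3; linarith
    have hub : Real.pi - x < ε := by linarith
    have hlb : ε ^ 2 ≤ Real.pi - x := by linarith
    have hnn : 0 ≤ Real.log ((Real.pi - x) / ε ^ 2) :=
      Real.log_nonneg ((one_le_div he2).mpr hlb)
    rw [abs_of_nonneg hnn, ← hlogdiv]
    exact Real.log_le_log (div_pos (he2.trans_le hlb) he2) (by gcongr)
  · simpa using hL

lemma vfam_nonneg {ε : ℝ} (h0 : 0 < ε) (h1 : ε < 1) (x : ℝ) : 0 ≤ vfam ε x := by
  have he2 : (0:ℝ) < ε ^ 2 := by positivity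
  unfold vfam
  split_ifs with H1 H2 H3 H4
  · exact le_refl _
  · exact Real.log_nonneg ((one_le_div he2).mpr (not_le.mp H1).le)
  · exact Real.log_nonneg ((le_div_iff₀ h0).mpr (by linarith))
  · exact Real.log_nonneg ((one_le_div he2).mpr (by linarith))
  · exact le_refl _

set_option maxHeartbeats 1000000 in
lemma key {ε : ℝ} (h0 : 0 < ε) (h4 : ε < Real.pi / 4) :
    -Real.log ε / 2 ≤ (∫ x in (0:ℝ)..Real.pi, vfam ε x * Real.sin x) ^ 2
      / ∫ x in (0:ℝ)..Real.pi, (vfam' ε x) ^ 2 * Real.sin x := by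
  have hpi : (0:ℝ) < Real.pi := Real.pi_pos
  have hpi4 : Real.pi < 4 := by
    have := Real.pi_lt_d2; linarith
  have h1 : ε < 1 := by linarith
  have he2 : (0:ℝ) < ε ^ 2 := by positivity
  have he2lt : ε ^ 2 < ε := by nlinarith
  have hεπ : ε < Real.pi - ε := by linarith
  have hπε2 : Real.pi - ε < Real.pi - ε ^ 2 := by linarith
  have hπε2π : Real.pi - ε ^ 2 < Real.pi := by linarith
  set L : ℝ := -Real.log ε with hLdef
  have hL : 0 < L := by
    have := Real.log_neg h0 h1; simp only [hLdef]; linarith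
  have hlogdiv : Real.log (ε / ε ^ 2) = L := by
    rw [Real.log_div h0.ne' (by positivity), Real.log_pow]; push_cast; simp only [hLdef]; ring
  set N := ∫ x in (0:ℝ)..Real.pi, vfam ε x * Real.sin x with hNdef
  set D := ∫ x in (0:ℝ)..Real.pi, (vfam' ε x) ^ 2 * Real.sin x with hDdef
  -- integrability
  have hNi : ∀ a b : ℝ, IntervalIntegrable (fun x => vfam ε x * Real.sin x) volume a b := by
    intro a b
    refine ii_of_bounded (by exact (vfam_meas ε).mul Real.measurable_sin) a b (C := L) ?_
    intro x
    rw [abs_mul]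
    calc |vfam ε x| * |Real.sin x| ≤ L * 1 := by
          exact mul_le_mul (vfam_abs_le h0 h1 x) (Real.abs_sin_le_one x) (abs_nonneg _) hL.le
      _ = L := mul_one L
  have hv'abs : ∀ x, |vfam' ε x| ≤ (ε ^ 2)⁻¹ := by
    intro x
    unfold vfam'
    split_ifs with H1 H2
    · have hx0 : 0 < x := he2.trans H1.1
      rw [abs_of_nonneg (one_div_pos.mpr hx0).le, one_div]
      exact inv_anti₀ he2 H1.1.le
    · have hx : x - Real.pi < 0 := by linarith [H2.2]
      rw [abs_div, abs_one, abs_of_neg hx, one_div]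
      exact inv_anti₀ he2 (by linarith [H2.2])
    · simpa using (by positivity : (0:ℝ) ≤ (ε ^ 2)⁻¹)
  have hDi : ∀ a b : ℝ, IntervalIntegrable (fun x => (vfam' ε x) ^ 2 * Real.sin x) volume a b := by
    intro a b
    refine ii_of_bounded (by exact ((vfam'_meas ε).pow_const 2).mul Real.measurable_sin) a b
      (C := ((ε ^ 2)⁻¹) ^ 2) ?_
    intro x
    rw [abs_mul]
    calc |vfam' ε x ^ 2| * |Real.sin x| ≤ ((ε ^ 2)⁻¹) ^ 2 * 1 := by
          refine mul_le_mul ?_ (Real.abs_sin_le_one x) (abs_nonneg _) (by positivity)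
          rw [abs_pow]
          exact pow_le_pow_left₀ (abs_nonneg _) (hv'abs x) 2
      _ = ((ε ^ 2)⁻¹) ^ 2 := mul_one _
  have hgabs : ∀ x, |gfun ε x| ≤ (ε ^ 2)⁻¹ := by
    intro x
    unfold gfun
    split_ifs with H1 H2
    · have hx0 : 0 < x := he2.trans H1.1
      rw [abs_of_nonneg (one_div_pos.mpr hx0).le, one_div]
      exact inv_anti₀ he2 H1.1.le
    · have hx : 0 < Real.pi - x := by linarith [H2.2]
      rw [abs_of_nonneg (one_div_pos.mpr hx).le, one_div]
      exact inv_anti₀ he2 (by linarith [H2.2])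
    · simpa using (by positivity : (0:ℝ) ≤ (ε ^ 2)⁻¹)
  have hgi : ∀ a b : ℝ, IntervalIntegrable (gfun ε) volume a b := fun a b =>
    ii_of_bounded (gfun_meas ε) a b hgabs
  -- numerator lower bound
  have hsin_nonneg : ∀ x ∈ Set.Icc (0:ℝ) Real.pi, 0 ≤ Real.sin x := fun x hx =>
    Real.sin_nonneg_of_nonneg_of_le_pi hx.1 hx.2
  have hNsplit : N = (∫ x in (0:ℝ)..ε, vfam ε x * Real.sin x)
      + ((∫ x in ε..(Real.pi - ε), vfam ε x * Real.sin x)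
      + ∫ x in (Real.pi - ε)..Real.pi, vfam ε x * Real.sin x) := by
    rw [hNdef, ← integral_add_adjacent_intervals (hNi 0 ε) (hNi ε Real.pi),
      ← integral_add_adjacent_intervals (hNi ε (Real.pi - ε)) (hNi (Real.pi - ε) Real.pi)]
  have hp1 : 0 ≤ ∫ x in (0:ℝ)..ε, vfam ε x * Real.sin x := by
    refine intervalIntegral.integral_nonneg h0.le fun x hx => ?_
    exact mul_nonneg (vfam_nonneg h0 h1 x) (hsin_nonneg x ⟨hx.1, hx.2.trans (by linarith)⟩)
  have hp3 : 0 ≤ ∫ x in (Real.pi - ε)..Real.pi, vfam ε x * Real.sin x := by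
    refine intervalIntegral.integral_nonneg (by linarith) fun x hx => ?_
    exact mul_nonneg (vfam_nonneg h0 h1 x) (hsin_nonneg x ⟨by linarith [hx.1], hx.2⟩)
  have hp2 : (∫ x in ε..(Real.pi - ε), vfam ε x * Real.sin x) = L * (2 * Real.cos ε) := by
    rw [intervalIntegral.integral_congr (g := fun x => L * Real.sin x) ?_]
    · rw [intervalIntegral.integral_const_mul, integral_sin, Real.cos_pi_sub]; ring
    · intro x hx
      rw [Set.uIcc_of_le hεπ.le] at hx
      show vfam ε x * Real.sin x = L * Real.sin x
      congr 1
      unfold vfam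
      split_ifs with H1 H2 H3 H4
      · linarith [hx.1]
      · have : x = ε := le_antisymm H2 hx.1
        rw [this, hlogdiv]
      · rw [one_div, Real.log_inv]
      · linarith [hx.2]
      · linarith [hx.2]
  have hcos : 1 ≤ 2 * Real.cos ε := by
    have h1 : Real.cos (Real.pi / 4) ≤ Real.cos ε := by
      apply Real.cos_le_cos_of_nonneg_of_le_pi h0.le (by linarith) h4.le
    rw [Real.cos_pi_div_four] at h1
    nlinarith [Real.sq_sqrt (by norm_num : (2:ℝ) ≥ 0), Real.sqrt_nonneg 2]
  have hN : L ≤ N := by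
    rw [hNsplit, hp2]
    nlinarith
  -- pointwise bound for denominator integrand
  have hle : ∀ x ∈ Set.Icc (0:ℝ) Real.pi, (vfam' ε x) ^ 2 * Real.sin x ≤ gfun ε x := by
    intro x hx
    unfold vfam' gfun
    split_ifs with H1 H2
    · have hx0 : 0 < x := he2.trans H1.1
      have hs : Real.sin x ≤ x := Real.sin_le hx0.le
      calc (1/x) ^ 2 * Real.sin x ≤ (1/x) ^ 2 * x := mul_le_mul_of_nonneg_left hs (sq_nonneg _)
        _ = 1/x := by field_simp
    · have hxπ : 0 < Real.pi - x := by linarith [H2.2]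
      have hs : Real.sin x ≤ Real.pi - x := by
        rw [← Real.sin_pi_sub]; exact Real.sin_le hxπ.le
      have heq2 : (1/(x - Real.pi)) ^ 2 = (1/(Real.pi - x)) ^ 2 := by
        rw [div_pow, div_pow]
        congr 1
        ring
      rw [heq2]
      calc (1/(Real.pi - x)) ^ 2 * Real.sin x ≤ (1/(Real.pi - x)) ^ 2 * (Real.pi - x) :=
            mul_le_mul_of_nonneg_left hs (sq_nonneg _)
        _ = 1/(Real.pi - x) := by field_simp
    · simp
  have hDub0 : D ≤ ∫ x in (0:ℝ)..Real.pi, gfun ε x :=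
    intervalIntegral.integral_mono_on hpi.le (hDi 0 Real.pi) (hgi 0 Real.pi) hle
  -- compute ∫ gfun = 2 L
  have hg1 : (∫ x in (0:ℝ)..ε^2, gfun ε x) = 0 := by
    rw [intervalIntegral.integral_congr (g := fun _ => (0:ℝ)) ?_, intervalIntegral.integral_zero]
    intro x hx
    rw [Set.uIcc_of_le he2.le] at hx
    show gfun ε x = 0
    unfold gfun
    split_ifs with A B
    · exfalso; linarith [hx.2, A.1]
    · exfalso; linarith [hx.2, B.1]
    · rfl
  have hzero_notin : (0:ℝ) ∉ Set.uIcc (ε^2) ε := by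
    rw [Set.uIcc_of_le he2lt.le]
    rintro ⟨h, -⟩; linarith
  have hg2 : (∫ x in (ε^2)..ε, gfun ε x) = L := by
    have hcg : (∫ x in (ε^2)..ε, gfun ε x) = ∫ x in (ε^2)..ε, 1/x := by
      refine intervalIntegral.integral_congr_ae ?_
      filter_upwards [compl_mem_ae_iff.mpr (Real.volume_singleton (a := ε))] with x hx hmem
      rw [Set.uIoc_of_le he2lt.le] at hmem
      have hlt : x < ε := lt_of_le_of_ne hmem.2 (by simpa using hx)
      unfold gfun
      rw [if_pos ⟨hmem.1, hlt⟩]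
    rw [hcg, integral_one_div hzero_notin, hlogdiv]
  have hg3 : (∫ x in ε..(Real.pi - ε), gfun ε x) = 0 := by
    rw [intervalIntegral.integral_congr (g := fun _ => (0:ℝ)) ?_, intervalIntegral.integral_zero]
    intro x hx
    rw [Set.uIcc_of_le hεπ.le] at hx
    show gfun ε x = 0
    unfold gfun
    split_ifs with A B
    · exfalso; linarith [hx.1, A.2]
    · exfalso; linarith [hx.2, B.1]
    · rfl
  have hg4 : (∫ x in (Real.pi - ε)..(Real.pi - ε^2), gfun ε x) = L := by
    have hcg : (∫ x in (Real.pi - ε)..(Real.pi - ε^2), gfun ε x)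
        = ∫ x in (Real.pi - ε)..(Real.pi - ε^2), 1/(Real.pi - x) := by
      refine intervalIntegral.integral_congr_ae ?_
      filter_upwards [compl_mem_ae_iff.mpr (Real.volume_singleton (a := Real.pi - ε^2))]
        with x hx hmem
      rw [Set.uIoc_of_le hπε2.le] at hmem
      have hlt : x < Real.pi - ε^2 := lt_of_le_of_ne hmem.2 (by simpa using hx)
      unfold gfun
      rw [if_neg (by rintro ⟨-, hb⟩; linarith [hmem.1]), if_pos ⟨hmem.1, hlt⟩]
    have hcs := integral_comp_sub_left (a := Real.pi - ε) (b := Real.pi - ε^2)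
      (fun u => (1:ℝ)/u) Real.pi
    rw [show Real.pi - (Real.pi - ε^2) = ε^2 by ring,
      show Real.pi - (Real.pi - ε) = ε by ring] at hcs
    rw [hcg, hcs, integral_one_div hzero_notin, hlogdiv]
  have hg5 : (∫ x in (Real.pi - ε^2)..Real.pi, gfun ε x) = 0 := by
    rw [intervalIntegral.integral_congr (g := fun _ => (0:ℝ)) ?_, intervalIntegral.integral_zero]
    intro x hx
    rw [Set.uIcc_of_le hπε2π.le] at hx
    show gfun ε x = 0
    unfold gfun
    split_ifs with A B
    · exfalso; linarith [hx.1, A.2]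
    · exfalso; linarith [hx.1, B.2]
    · rfl
  have hDub : D ≤ 2 * L := by
    have hGsum : (∫ x in (0:ℝ)..Real.pi, gfun ε x) = 2 * L := by
      rw [← integral_add_adjacent_intervals (hgi 0 (ε^2)) (hgi (ε^2) Real.pi),
        ← integral_add_adjacent_intervals (hgi (ε^2) ε) (hgi ε Real.pi),
        ← integral_add_adjacent_intervals (hgi ε (Real.pi - ε)) (hgi (Real.pi - ε) Real.pi),
        ← integral_add_adjacent_intervals (hgi (Real.pi - ε) (Real.pi - ε^2))
          (hgi (Real.pi - ε^2) Real.pi),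
        hg1, hg2, hg3, hg4, hg5]
      ring
    linarith [hDub0, hGsum.le, hGsum.ge]
  -- D > 0
  have hDpos : 0 < D := by
    have hDsplit : D = (∫ x in (0:ℝ)..ε^2, (vfam' ε x) ^ 2 * Real.sin x)
        + ((∫ x in (ε^2)..ε, (vfam' ε x) ^ 2 * Real.sin x)
        + ∫ x in ε..Real.pi, (vfam' ε x) ^ 2 * Real.sin x) := by
      rw [hDdef, ← integral_add_adjacent_intervals (hDi 0 (ε^2)) (hDi (ε^2) Real.pi),
        ← integral_add_adjacent_intervals (hDi (ε^2) ε) (hDi ε Real.pi)]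
    have q1 : 0 ≤ ∫ x in (0:ℝ)..ε^2, (vfam' ε x) ^ 2 * Real.sin x := by
      refine intervalIntegral.integral_nonneg he2.le fun x hx => ?_
      exact mul_nonneg (sq_nonneg _) (hsin_nonneg x ⟨hx.1, by nlinarith [hx.2]⟩)
    have q3 : 0 ≤ ∫ x in ε..Real.pi, (vfam' ε x) ^ 2 * Real.sin x := by
      refine intervalIntegral.integral_nonneg (by linarith) fun x hx => ?_
      exact mul_nonneg (sq_nonneg _) (hsin_nonneg x ⟨by linarith [hx.1], hx.2⟩)
    have q2 : 0 < ∫ x in (ε^2)..ε, (vfam' ε x) ^ 2 * Real.sin x := by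
      refine intervalIntegral_pos_of_pos_on (hDi _ _) (fun x hx => ?_) he2lt
      have hx0 : 0 < x := he2.trans hx.1
      have hsin : 0 < Real.sin x := Real.sin_pos_of_pos_of_lt_pi hx0 (by linarith [hx.2])
      have hne : vfam' ε x = 1/x := by unfold vfam'; rw [if_pos ⟨hx.1, hx.2⟩]
      rw [hne]
      positivity
    linarith
  -- conclude
  have h1 : N ^ 2 / (2*L) ≤ N ^ 2 / D :=
    div_le_div_of_nonneg_left (sq_nonneg N) hDpos hDub
  have h2 : L ^ 2 / (2*L) ≤ N ^ 2 / (2*L) :=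
    (div_le_div_iff_of_pos_right (by linarith : (0:ℝ) < 2*L)).mpr (by nlinarith)
  have heqL : L ^ 2 / (2*L) = L / 2 := by
    rw [sq]
    field_simp
  linarith

/-- There is no constant `C > 0` for which the weighted Poincaré inequality with weight
`sin x` and exponent `p = 2` holds for all the `W₀^{1,2}((0,π))` functions `v_ε`;
concretely, the ratio `(∫₀^π v_ε sin)² / ∫₀^π (v_ε')² sin` tends to `∞` as `ε → 0⁺`. -/
theorem stmt_2 :
    (¬ ∃ C > (0 : ℝ), ∀ ε ∈ Set.Ioo (0 : ℝ) (Real.pi / 4),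
        C * (∫ x in (0:ℝ)..Real.pi, vfam ε x * Real.sin x) ^ 2
          ≤ ∫ x in (0:ℝ)..Real.pi, (vfam' ε x) ^ 2 * Real.sin x) ∧
    Tendsto (fun ε : ℝ =>
        (∫ x in (0:ℝ)..Real.pi, vfam ε x * Real.sin x) ^ 2
          / ∫ x in (0:ℝ)..Real.pi, (vfam' ε x) ^ 2 * Real.sin x)
      (nhdsWithin 0 (Set.Ioi 0)) atTop := by
  have hmemIoo : Set.Ioo (0:ℝ) (Real.pi / 4) ∈ nhdsWithin (0:ℝ) (Set.Ioi 0) :=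
    Ioo_mem_nhdsGT_of_mem (Set.mem_Ico.mpr ⟨le_refl 0, by positivity⟩)
  have htend : Tendsto (fun ε : ℝ =>
      (∫ x in (0:ℝ)..Real.pi, vfam ε x * Real.sin x) ^ 2
        / ∫ x in (0:ℝ)..Real.pi, (vfam' ε x) ^ 2 * Real.sin x)
      (nhdsWithin 0 (Set.Ioi 0)) atTop := by
    refine tendsto_atTop_mono' _ (f₁ := fun ε => -Real.log ε / 2) ?_ ?_
    · filter_upwards [hmemIoo] with ε hε
      exact key hε.1 hε.2
    · have h1 : Tendsto Real.log (nhdsWithin (0:ℝ) (Set.Ioi 0)) atBot :=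
        Real.tendsto_log_nhdsGT_zero
      exact (tendsto_neg_atBot_atTop.comp h1).atTop_div_const two_pos
  refine ⟨?_, htend⟩
  rintro ⟨C, hC, hall⟩
  have hev := (htend.eventually_ge_atTop (1/C + 1)).and hmemIoo
  obtain ⟨ε, hr, hmem⟩ := hev.exists
  set N := ∫ x in (0:ℝ)..Real.pi, vfam ε x * Real.sin x with hNdef
  set D := ∫ x in (0:ℝ)..Real.pi, (vfam' ε x) ^ 2 * Real.sin x with hDdef
  have hCN : C * N ^ 2 ≤ D := hall ε hmem
  have hDpos : 0 < D := by
    by_contra h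
    push_neg at h
    have h2 : N ^ 2 / D ≤ 0 := div_nonpos_of_nonneg_of_nonpos (sq_nonneg N) h
    have h3 : (0:ℝ) < 1/C + 1 := by positivity
    linarith
  have h5 : (1/C + 1) * D ≤ N ^ 2 := (le_div_iff₀ hDpos).mp hr
  have hC1 : C * (1/C) = 1 := mul_one_div_cancel hC.ne'
  nlinarith [mul_le_mul_of_nonneg_left h5 hC.le, mul_pos hC hDpos]
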